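/- Let ρ be a density operator on an N-fold tensor product of a Hilbert space H, and |ψ⟩ ∈ H a unit vector. Define O_L = I − (1/N)Σⱼ |ψ⟩⟨ψ|ⱼ ⊗ I_{j̄} and O_G = I − |ψ⟩⟨ψ|^{⊗N}. Then Tr(O_L ρ) ≤ Tr(O_G ρ) ≤ N·Tr(O_L ρ). -/

import Mathlib

open Matrix
open scoped ComplexOrder

/-- The operator `P_j ⊗ I_{j̄}` on `H^{⊗N}` (with `H = ℂ^d` and `H^{⊗N}` identified with
`ℂ^(Fin N → Fin d)`): it acts as `P` on the `j`-th tensor factor and as identity elsewhere. -/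
def factorOp (d N : ℕ) (P : Matrix (Fin d) (Fin d) ℂ) (j : Fin N) :
    Matrix (Fin N → Fin d) (Fin N → Fin d) ℂ :=
  fun x y => P (x j) (y j) * ∏ i ∈ Finset.univ.erase j, (if x i = y i then (1 : ℂ) else 0)

/-- The `N`-fold tensor power `P^{⊗N}`. -/
def tensorPow (d N : ℕ) (P : Matrix (Fin d) (Fin d) ℂ) :
    Matrix (Fin N → Fin d) (Fin N → Fin d) ℂ :=
  fun x y => ∏ i, P (x i) (y i)

namespace LGCaux

variable {n : Type*} [Fintype n] [DecidableEq n]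

lemma psd_trace_nonneg {A : Matrix n n ℂ} (hA : A.PosSemidef) : 0 ≤ A.trace := by
  rw [Matrix.trace]
  apply Finset.sum_nonneg
  intro i _
  have := hA.dotProduct_mulVec_nonneg (Pi.single i 1)
  simpa [Matrix.mulVec, dotProduct, Pi.single_apply] using this

lemma psd_trace_mul_nonneg {A ρ : Matrix n n ℂ} (hA : A.PosSemidef) (hρ : ρ.PosSemidef) :
    0 ≤ (A * ρ).trace := by
  obtain ⟨S, hSH, hSmul⟩ : ∃ S : Matrix n n ℂ, Sᴴ = S ∧ S * S = ρ :=
    open scoped MatrixOrder in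
    ⟨CFC.sqrt ρ, (CFC.sqrt_nonneg ρ).posSemidef.1, CFC.sqrt_mul_sqrt_self ρ hρ.nonneg⟩
  rw [← hSmul, ← Matrix.mul_assoc, Matrix.trace_mul_comm (A * S) S, ← Matrix.mul_assoc]
  have : S * A * S = Sᴴ * A * S := by rw [hSH]
  rw [this]
  exact psd_trace_nonneg (hA.conjTranspose_mul_mul_same _)

lemma psd_of_proj {E : Matrix n n ℂ} (h1 : Eᴴ = E) (h2 : E * E = E) : E.PosSemidef := by
  have h := Matrix.posSemidef_conjTranspose_mul_self E
  rw [h1, h2] at h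
  exact h

lemma psd_one_sub_mul_one_sub {A B : Matrix n n ℂ} (hAH : Aᴴ = A) (hBH : Bᴴ = B)
    (hAA : A * A = A) (hBB : B * B = B) (hAB : A * B = B * A) :
    ((1 - A) * (1 - B)).PosSemidef := by
  have e1 : (1 - A) * (1 - B) = 1 - A - B + A * B := by noncomm_ring
  have e2 : (1 - B) * (1 - A) = 1 - B - A + B * A := by noncomm_ring
  rw [← hAB] at e2
  have hcomm : (1 - B) * (1 - A) = (1 - A) * (1 - B) := by rw [e1, e2]; abel
  have hA' : (1 - A) * (1 - A) = 1 - A := by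
    have : (1 - A) * (1 - A) = 1 - A - A + A * A := by noncomm_ring
    rw [this, hAA]; abel
  have hB' : (1 - B) * (1 - B) = 1 - B := by
    have : (1 - B) * (1 - B) = 1 - B - B + B * B := by noncomm_ring
    rw [this, hBB]; abel
  apply psd_of_proj
  · rw [Matrix.conjTranspose_mul, Matrix.conjTranspose_sub, Matrix.conjTranspose_sub,
      Matrix.conjTranspose_one, hAH, hBH, hcomm]
  · calc ((1 - A) * (1 - B)) * ((1 - A) * (1 - B))
        = (1 - A) * (((1 - B) * (1 - A)) * (1 - B)) := by
          simp only [Matrix.mul_assoc]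
      _ = (1 - A) * ((1 - A) * ((1 - B) * (1 - B))) := by rw [hcomm, Matrix.mul_assoc]
      _ = (1 - A) * ((1 - A) * (1 - B)) := by rw [hB']
      _ = ((1 - A) * (1 - A)) * (1 - B) := by rw [← Matrix.mul_assoc]
      _ = (1 - A) * (1 - B) := by rw [hA']

/-- `Mop P s` acts as `P` on coordinates in `s` and as identity elsewhere. -/
def Mop (d N : ℕ) (P : Matrix (Fin d) (Fin d) ℂ) (s : Finset (Fin N)) :
    Matrix (Fin N → Fin d) (Fin N → Fin d) ℂ :=
  fun x y => ∏ i, (if i ∈ s then P else 1) (x i) (y i)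

variable {d N : ℕ} {P : Matrix (Fin d) (Fin d) ℂ}

lemma Mop_empty : Mop d N P ∅ = 1 := by
  funext x y
  simp only [Mop, Finset.notMem_empty, if_false, Matrix.one_apply]
  rw [Finset.prod_boole]
  by_cases h : x = y
  · simp [h]
  · rw [if_neg, if_neg h]
    rw [funext_iff] at h
    simpa using h

lemma pi_mul_apply (A B : Fin N → Matrix (Fin d) (Fin d) ℂ) (x y : Fin N → Fin d) :
    ∑ z : Fin N → Fin d, (∏ i, A i (x i) (z i)) * (∏ i, B i (z i) (y i))
    = ∏ i, (A i * B i) (x i) (y i) := by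
  simp only [Matrix.mul_apply]
  conv_rhs => rw [Fintype.prod_sum]
  exact Finset.sum_congr rfl fun z _ => (Finset.prod_mul_distrib).symm

lemma Mop_mul (hPP : P * P = P) (s t : Finset (Fin N)) :
    Mop d N P s * Mop d N P t = Mop d N P (s ∪ t) := by
  have key : ∀ i : Fin N, (if i ∈ s then P else 1) * (if i ∈ t then P else 1)
      = if i ∈ s ∪ t then P else 1 := by
    intro i
    by_cases hs : i ∈ s <;> by_cases ht : i ∈ t <;>
      simp [hs, ht, hPP, Finset.mem_union]
  funext x y
  rw [Matrix.mul_apply]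
  refine (pi_mul_apply (fun i => if i ∈ s then P else 1) (fun i => if i ∈ t then P else 1) x y).trans ?_
  exact Finset.prod_congr rfl fun i _ => by rw [key i]

lemma Mop_herm (hPH : Pᴴ = P) (s : Finset (Fin N)) : (Mop d N P s)ᴴ = Mop d N P s := by
  funext x y
  rw [Matrix.conjTranspose_apply]
  simp only [Mop]
  rw [star_prod]
  refine Finset.prod_congr rfl fun i _ => ?_
  by_cases hi : i ∈ s
  · simp only [hi, if_true]
    have := congrFun (congrFun hPH (x i)) (y i)
    rw [Matrix.conjTranspose_apply] at this
    exact this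
  · simp only [hi, if_false, Matrix.one_apply]
    by_cases h : x i = y i <;> simp [h, eq_comm]

lemma factorOp_eq (j : Fin N) : factorOp d N P j = Mop d N P {j} := by
  funext x y
  simp only [factorOp, Mop]
  rw [← Finset.mul_prod_erase Finset.univ _ (Finset.mem_univ j)]
  simp only [Finset.mem_singleton, if_pos rfl]
  congr 1
  refine Finset.prod_congr rfl fun i hi => ?_
  rw [if_neg (Finset.ne_of_mem_erase hi), Matrix.one_apply]

lemma tensorPow_eq : tensorPow d N P = Mop d N P Finset.univ := by
  funext x y
  simp [tensorPow, Mop]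

end LGCaux
/-- For a density operator `ρ` on `H^{⊗N}` and a unit vector `ψ ∈ H`, with
`O_L = I − (1/N)Σⱼ |ψ⟩⟨ψ|ⱼ ⊗ I_{j̄}` and `O_G = I − |ψ⟩⟨ψ|^{⊗N}`, one has
`Tr(O_L ρ) ≤ Tr(O_G ρ) ≤ N·Tr(O_L ρ)`. -/
theorem local_global_cost_inequality (d N : ℕ) (hd : 0 < d) (hN : 1 ≤ N)
    (ψ : Fin d → ℂ) (hψ : ∑ a, ‖ψ a‖^2 = 1)
    (P : Matrix (Fin d) (Fin d) ℂ) (hP : P = fun a b => ψ a * star (ψ b))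
    (ρ : Matrix (Fin N → Fin d) (Fin N → Fin d) ℂ)
    (hρ : ρ.PosSemidef) (hρtr : ρ.trace = 1)
    (OL OG : Matrix (Fin N → Fin d) (Fin N → Fin d) ℂ)
    (hOL : OL = 1 - ((N : ℂ)⁻¹) • ∑ j : Fin N, factorOp d N P j)
    (hOG : OG = 1 - tensorPow d N P) :
    ((OL * ρ).trace).re ≤ ((OG * ρ).trace).re ∧
    ((OG * ρ).trace).re ≤ (N : ℝ) * ((OL * ρ).trace).re := by
  classical
  have hN0 : (N : ℂ) ≠ 0 := Nat.cast_ne_zero.mpr (by omega)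
  -- basic facts about P
  have hPH : Pᴴ = P := by
    subst hP; ext a b
    erw [Matrix.conjTranspose_apply]
    simp [mul_comm]
  have hPP : P * P = P := by
    have hsum : ∑ c, star (ψ c) * ψ c = 1 := by
      have h1 : ∀ c, star (ψ c) * ψ c = ((‖ψ c‖^2 : ℝ) : ℂ) := by
        intro c
        rw [mul_comm, Complex.star_def, Complex.mul_conj, Complex.normSq_eq_norm_sq]
      rw [Finset.sum_congr rfl fun c _ => h1 c, ← Complex.ofReal_sum, hψ,
        Complex.ofReal_one]
    subst hP; ext a b
    erw [Matrix.mul_apply]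
    have : ∀ c, (ψ a * star (ψ c)) * (ψ c * star (ψ b))
        = (ψ a * star (ψ b)) * (star (ψ c) * ψ c) := fun c => by ring
    calc ∑ c, (ψ a * star (ψ c)) * (ψ c * star (ψ b))
        = ∑ c, (ψ a * star (ψ b)) * (star (ψ c) * ψ c) :=
          Finset.sum_congr rfl fun c _ => this c
      _ = (ψ a * star (ψ b)) * ∑ c, (star (ψ c) * ψ c) := by rw [Finset.mul_sum]
      _ = ψ a * star (ψ b) := by rw [hsum, mul_one]
  -- abbreviations
  set Q : Fin N → Matrix (Fin N → Fin d) (Fin N → Fin d) ℂ :=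
    fun j => LGCaux.Mop d N P {j} with hQdef
  set T : Matrix (Fin N → Fin d) (Fin N → Fin d) ℂ :=
    LGCaux.Mop d N P Finset.univ with hTdef
  have hOL' : OL = 1 - ((N : ℂ)⁻¹) • ∑ j : Fin N, Q j := by
    rw [hOL, Finset.sum_congr rfl fun (j : Fin N) _ => LGCaux.factorOp_eq (P := P) j]
  have hOG' : OG = 1 - T := by rw [hOG, LGCaux.tensorPow_eq]
  -- products
  have qq : ∀ j, Q j * Q j = Q j := fun j => by
    simpa using LGCaux.Mop_mul hPP ({j} : Finset (Fin N)) {j}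
  have qt : ∀ j, Q j * T = T := fun j => by
    have h := LGCaux.Mop_mul hPP ({j} : Finset (Fin N)) Finset.univ
    rwa [Finset.union_eq_right.mpr (Finset.subset_univ _)] at h
  have tq : ∀ j, T * Q j = T := fun j => by
    have h := LGCaux.Mop_mul hPP Finset.univ ({j} : Finset (Fin N))
    rwa [Finset.union_eq_left.mpr (Finset.subset_univ _)] at h
  have tt : T * T = T := by
    simpa using LGCaux.Mop_mul hPP (Finset.univ : Finset (Fin N)) Finset.univ
  have qH : ∀ j, (Q j)ᴴ = Q j := fun j => LGCaux.Mop_herm hPH _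
  have tH : Tᴴ = T := LGCaux.Mop_herm hPH _
  -- first PSD matrix : A1 = ∑ Q j - N • T
  have hQTpsd : ∀ j : Fin N, (Q j - T).PosSemidef := by
    intro j
    apply LGCaux.psd_of_proj
    · rw [Matrix.conjTranspose_sub, qH, tH]
    · rw [Matrix.sub_mul, Matrix.mul_sub, Matrix.mul_sub, qq, qt, tq, tt]
      abel
  have hA1psd : ((∑ j : Fin N, Q j) - (N : ℂ) • T).PosSemidef := by
    have hsplit : (∑ j : Fin N, Q j) - (N : ℂ) • T = ∑ j : Fin N, (Q j - T) := by
      rw [Finset.sum_sub_distrib, Finset.sum_const, Finset.card_univ, Fintype.card_fin,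
        Nat.cast_smul_eq_nsmul]
    rw [hsplit]
    apply Finset.sum_induction _ _ (fun a b ha hb => ha.add hb)
    · exact Matrix.PosSemidef.zero
    · exact fun j _ => hQTpsd j
  -- second PSD matrix : A2 = ∑ (1 - g j)(1 - Q j)
  set g : ℕ → Matrix (Fin N → Fin d) (Fin N → Fin d) ℂ :=
    fun k => LGCaux.Mop d N P (Finset.univ.filter (fun i : Fin N => (i : ℕ) < k)) with hgdef
  have hg0 : g 0 = 1 := by
    have h : (Finset.univ.filter (fun i : Fin N => (i : ℕ) < 0)) = ∅ := by simp
    rw [hgdef]; simp only [h]; exact LGCaux.Mop_empty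
  have hgN : g N = T := by
    have h : (Finset.univ.filter (fun i : Fin N => (i : ℕ) < N)) = Finset.univ := by
      simp [Fin.is_lt]
    rw [hgdef]; simp only [h]; rfl
  have hstep : ∀ j : Fin N,
      (Finset.univ.filter (fun i : Fin N => (i : ℕ) < (j : ℕ) + 1))
      = (Finset.univ.filter (fun i : Fin N => (i : ℕ) < (j : ℕ))) ∪ {j} := by
    intro j
    ext i
    simp [Nat.lt_succ_iff_lt_or_eq, Fin.val_eq_val, le_iff_eq_or_lt]
  have gH : ∀ k, (g k)ᴴ = g k := fun k => LGCaux.Mop_herm hPH _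
  have gg : ∀ k, g k * g k = g k := fun k => by
    have h := LGCaux.Mop_mul hPP (Finset.univ.filter (fun i : Fin N => (i : ℕ) < k))
      (Finset.univ.filter (fun i : Fin N => (i : ℕ) < k))
    rwa [Finset.union_self] at h
  have gq : ∀ j : Fin N, g ↑j * Q j = g (↑j + 1) := by
    intro j
    show LGCaux.Mop d N P _ * LGCaux.Mop d N P _ = _
    rw [LGCaux.Mop_mul hPP, ← hstep j]
  have qg : ∀ j : Fin N, Q j * g ↑j = g (↑j + 1) := by
    intro j
    show LGCaux.Mop d N P _ * LGCaux.Mop d N P _ = _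
    rw [LGCaux.Mop_mul hPP, Finset.union_comm, ← hstep j]
  have hEpsd : ∀ j : Fin N, ((1 - g ↑j) * (1 - Q j)).PosSemidef := by
    intro j
    exact LGCaux.psd_one_sub_mul_one_sub (gH _) (qH _) (gg _) (qq _)
      (by rw [gq j, qg j])
  have hA2psd : (∑ j : Fin N, (1 - g ↑j) * (1 - Q j)).PosSemidef := by
    apply Finset.sum_induction _ _ (fun a b ha hb => ha.add hb)
    · exact Matrix.PosSemidef.zero
    · exact fun j _ => hEpsd j
  -- identification of the sums with the operators of interest
  have tele : ∑ j : Fin N, (g ↑j - g (↑j + 1)) = 1 - T := by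
    rw [Fin.sum_univ_eq_sum_range (fun k => g k - g (k + 1)) N,
      Finset.sum_range_sub' g N, hg0, hgN]
  have hsumE : ∑ j : Fin N, (1 - g ↑j) * (1 - Q j)
      = (N : ℂ) • (1 : Matrix (Fin N → Fin d) (Fin N → Fin d) ℂ)
        - (∑ j : Fin N, Q j) - 1 + T := by
    have hterm : ∀ j : Fin N,
        (1 - g ↑j) * (1 - Q j) = 1 - Q j - (g ↑j - g (↑j + 1)) := by
      intro j
      have e1 : (1 - g ↑j) * (1 - Q j) = 1 - g ↑j - Q j + g ↑j * Q j := by noncomm_ring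
      rw [e1, gq j]; abel
    rw [Finset.sum_congr rfl fun j _ => hterm j]
    rw [Finset.sum_sub_distrib, Finset.sum_sub_distrib, tele, Finset.sum_const,
      Finset.card_univ, Fintype.card_fin, Nat.cast_smul_eq_nsmul ℂ]
    abel
  have hc : Complex.ofReal ((N : ℝ)⁻¹) = (N : ℂ)⁻¹ := by push_cast; ring
  have eOGL : OG - OL = Complex.ofReal ((N : ℝ)⁻¹) • ((∑ j : Fin N, Q j) - (N : ℂ) • T) := by
    rw [hOL', hOG', smul_sub, smul_smul, hc, inv_mul_cancel₀ hN0, one_smul]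
    abel
  have eNL : (N : ℂ) • OL - OG = ∑ j : Fin N, (1 - g ↑j) * (1 - Q j) := by
    rw [hsumE, hOL', hOG', smul_sub, smul_smul, mul_inv_cancel₀ hN0, one_smul]
    abel
  -- trace inequalities
  have r1 : 0 ≤ ((((∑ j : Fin N, Q j) - (N : ℂ) • T) * ρ).trace).re := by
    have := LGCaux.psd_trace_mul_nonneg hA1psd hρ
    rw [Complex.le_def] at this
    simpa using this.1
  have r2 : 0 ≤ (((∑ j : Fin N, (1 - g ↑j) * (1 - Q j)) * ρ).trace).re := by
    have := LGCaux.psd_trace_mul_nonneg hA2psd hρ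
    rw [Complex.le_def] at this
    simpa using this.1
  have tr1 : ((OG * ρ).trace).re - ((OL * ρ).trace).re
      = (N : ℝ)⁻¹ * ((((∑ j : Fin N, Q j) - (N : ℂ) • T) * ρ).trace).re := by
    have h : (OG * ρ).trace - (OL * ρ).trace
        = Complex.ofReal ((N : ℝ)⁻¹) * ((((∑ j : Fin N, Q j) - (N : ℂ) • T)) * ρ).trace := by
      rw [← Matrix.trace_sub, ← Matrix.sub_mul, eOGL, Matrix.smul_mul, Matrix.trace_smul,
        smul_eq_mul]
    have := congrArg Complex.re h
    rwa [Complex.sub_re, Complex.re_ofReal_mul] at this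
  have tr2 : (N : ℝ) * ((OL * ρ).trace).re - ((OG * ρ).trace).re
      = (((∑ j : Fin N, (1 - g ↑j) * (1 - Q j)) * ρ).trace).re := by
    have hcN : (N : ℂ) = Complex.ofReal (N : ℝ) := by push_cast; ring
    have h : Complex.ofReal (N : ℝ) * (OL * ρ).trace - (OG * ρ).trace
        = ((∑ j : Fin N, (1 - g ↑j) * (1 - Q j)) * ρ).trace := by
      rw [← eNL, Matrix.sub_mul, Matrix.smul_mul, Matrix.trace_sub, Matrix.trace_smul,
        smul_eq_mul, hcN]
    have := congrArg Complex.re h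
    rwa [Complex.sub_re, Complex.re_ofReal_mul] at this
  constructor
  · nlinarith [mul_nonneg (inv_nonneg.mpr (Nat.cast_nonneg (α := ℝ) N)) r1, tr1]
  · linarith [tr2, r2]
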